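/- arXiv:1603.00129 — 10 statements merged into one kernel-verified Lean document; each statement's English description precedes it below -/
import Mathlib

section
/- Let A and B be finite partial orders and γ : A → B a covering map. For every covering chain b₁ ≺ b₂ ≺ ⋯ ≺ b_n in B with b_n maximal in B, there exists a covering chain a₁ ≺ a₂ ≺ ⋯ ≺ a_n in A with a_n maximal in A and γ(a_i) = b_i for all i. -/
/-- A covering map between finite partial orders. -/
def IsCoveringMap' {A B : Type*} [PartialOrder A] [PartialOrder B] (γ : A → B) : Prop :=
  Set.BijOn γ {a : A | IsMax a} {b : B | IsMax b} ∧
    ∀ a : A, Set.BijOn γ {c : A | c ⋖ a} {c : B | c ⋖ γ a}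

/-- Every covering chain in `B` ending at a maximal element lifts along a covering map `γ`
to a covering chain in `A` ending at a maximal element. -/
theorem stmt_3 {A B : Type*} [PartialOrder A] [PartialOrder B] [Fintype A] [Fintype B]
    (γ : A → B) (hγ : IsCoveringMap' γ) (n : ℕ) (b : Fin (n + 1) → B)
    (hchain : ∀ i : Fin n, b i.castSucc ⋖ b i.succ) (hmax : IsMax (b (Fin.last n))) :
    ∃ a : Fin (n + 1) → A,
      (∀ i : Fin n, a i.castSucc ⋖ a i.succ) ∧ IsMax (a (Fin.last n)) ∧
        ∀ i : Fin (n + 1), γ (a i) = b i := by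
  induction n with
  | zero =>
    obtain ⟨a0, ha0, hγa0⟩ := hγ.1.surjOn hmax
    exact ⟨fun _ => a0, fun i => i.elim0, ha0, fun i => by
      rw [show i = Fin.last 0 from Fin.fin_one_eq_zero i ▸ rfl]; exact hγa0⟩
  | succ n ih =>
    obtain ⟨a', hchain', hmax', heq'⟩ := ih (b ∘ Fin.succ)
      (fun i => by
        have := hchain i.succ
        simpa only [Function.comp_apply, Fin.succ_castSucc] using this)
      (by simpa using hmax)
    have hb01 : b 0 ⋖ γ (a' 0) := by
      have := hchain 0
      simpa [heq' 0] using this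
    obtain ⟨c, hc, hγc⟩ := (hγ.2 (a' 0)).surjOn hb01
    refine ⟨Fin.cases c a', fun i => ?_, by rw [← Fin.succ_last]; exact hmax', fun i => ?_⟩
    · induction i using Fin.cases with
      | zero => simpa only [Fin.cases_succ, Fin.castSucc_zero, Fin.cases_zero, Set.mem_setOf_eq] using hc
      | succ j =>
        have := hchain' j
        simpa only [Fin.cases_succ, ← Fin.succ_castSucc] using this
    · induction i using Fin.cases with
      | zero => simpa using hγc
      | succ j => simpa using heq' j
end

section
/- Let A and B be finite nonempty partial orders and γ : A → B a covering map. Then γ is a quotient map: for all b₁ ≤ b₂ in B there exist a₁ ≤ a₂ in A with γ(a₁) = b₁ and γ(a₂) = b₂. In particular γ is surjective. -/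
/-- Lifting lemma: if `b ≤ γ a` then there is `a' ≤ a` with `γ a' = b`. -/
theorem covering_lift {A B : Type*} [PartialOrder A] [PartialOrder B] [Fintype B]
    (γ : A → B) (hγ : IsCoveringMap' γ) (a : A) (b : B) (hb : b ≤ γ a) :
    ∃ a' : A, a' ≤ a ∧ γ a' = b := by
  classical
  haveI : LocallyFiniteOrder B := Fintype.toLocallyFiniteOrder
  have h : Relation.ReflTransGen (· ⋖ ·) b (γ a) := le_iff_reflTransGen_covBy.mp hb
  clear hb
  induction h using Relation.ReflTransGen.head_induction_on with
  | refl => exact ⟨a, le_rfl, rfl⟩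
  | head hbc _ ih =>
      obtain ⟨a', ha', rfl⟩ := ih
      obtain ⟨a'', ha'', hγa''⟩ := (hγ.2 a').surjOn hbc
      exact ⟨a'', (Set.mem_setOf_eq ▸ ha'').le.trans ha', hγa''⟩

/-- A covering map between finite nonempty partial orders is a quotient map (and hence
surjective): for all `b₁ ≤ b₂` in `B` there exist `a₁ ≤ a₂` in `A` mapped to them. -/
theorem stmt_4 {A B : Type*} [PartialOrder A] [PartialOrder B] [Fintype A] [Fintype B]
    [Nonempty A] [Nonempty B] (γ : A → B) (hγ : IsCoveringMap' γ) :
    (∀ b₁ b₂ : B, b₁ ≤ b₂ → ∃ a₁ a₂ : A, a₁ ≤ a₂ ∧ γ a₁ = b₁ ∧ γ a₂ = b₂) ∧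
      Function.Surjective γ := by
  classical
  have key : ∀ b₁ b₂ : B, b₁ ≤ b₂ → ∃ a₁ a₂ : A, a₁ ≤ a₂ ∧ γ a₁ = b₁ ∧ γ a₂ = b₂ := by
    intro b₁ b₂ hb
    -- find a maximal element above b₂
    obtain ⟨m, hm, hmax⟩ := Set.Finite.exists_maximalFor id {x : B | b₂ ≤ x}
      (Set.toFinite _) ⟨b₂, le_rfl⟩
    have hmmax : IsMax m := fun y hy => hmax (hm.trans hy) hy
    obtain ⟨am, hammax, hγam⟩ := hγ.1.surjOn hmmax
    obtain ⟨a₂, ha₂, hγa₂⟩ := covering_lift γ hγ am b₂ (hγam ▸ hm)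
    obtain ⟨a₁, ha₁, hγa₁⟩ := covering_lift γ hγ a₂ b₁ (hγa₂ ▸ hb)
    exact ⟨a₁, a₂, ha₁, hγa₁, hγa₂⟩
  refine ⟨key, fun b => ?_⟩
  obtain ⟨a₁, _, _, h, _⟩ := key b b le_rfl
  exact ⟨a₁, h⟩
end

section
/- Let P be a finite partial order and F its covering forest (words a₁⋯a_n forming covering chains ending at a maximal element, ordered by final-segment). Then the map φ : F → P sending a₁a₂⋯a_n to a₁ is a covering map; in particular, it is an order-preserving surjection. -/
def CoveringForest (P : Type*) [PartialOrder P] : Type _ :=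
  {l : List P // l ≠ [] ∧ l.Chain' (· ⋖ ·) ∧ ∀ x, l.getLast? = some x → IsMax x}

instance forestOrder (P : Type*) [PartialOrder P] : PartialOrder (CoveringForest P) where
  le w v := v.1 <:+ w.1
  le_refl w := List.suffix_refl _
  le_trans _ _ _ h₁ h₂ := List.IsSuffix.trans h₂ h₁
  le_antisymm _ _ h₁ h₂ := Subtype.ext (h₂.sublist.antisymm h₁.sublist)

def forestPhi {P : Type*} [PartialOrder P] (w : CoveringForest P) : P :=
  w.1.head w.2.1

section Aux
variable {P : Type*} [PartialOrder P]

lemma forest_le_iff {w v : CoveringForest P} : w ≤ v ↔ v.1 <:+ w.1 := Iff.rfl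

lemma forest_mem_of_suffix (w : CoveringForest P) {l : List P} (hne : l ≠ []) (hs : l <:+ w.1) :
    l ≠ [] ∧ l.Chain' (· ⋖ ·) ∧ ∀ x, l.getLast? = some x → IsMax x :=
  ⟨hne, w.2.2.1.suffix hs, fun x hx => w.2.2.2 x (by
    obtain ⟨pre, hp⟩ := hs
    rw [← hp, List.getLast?_append_of_ne_nil _ hne]
    exact hx)⟩

lemma forestPhi_eq {w : CoveringForest P} {a : P} {t : List P} (h : w.1 = a :: t) :
    forestPhi w = a := by
  simp only [forestPhi, h, List.head_cons]

def forestCons (w : CoveringForest P) (a : P) (h : a ⋖ forestPhi w) : CoveringForest P :=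
  ⟨a :: w.1, List.cons_ne_nil _ _, by
    rw [List.Chain', List.isChain_cons]
    refine ⟨fun y hy => ?_, w.2.2.1⟩
    rw [List.head?_eq_head w.2.1, Option.mem_some_iff] at hy
    exact hy ▸ h,
    fun x hx => w.2.2.2 x (by
      rwa [show a :: w.1 = [a] ++ w.1 from rfl,
        List.getLast?_append_of_ne_nil _ w.2.1] at hx)⟩

lemma forestCons_covBy (w : CoveringForest P) (a : P) (h : a ⋖ forestPhi w) :
    forestCons w a h ⋖ w := by
  constructor
  · refine lt_of_le_of_ne (List.suffix_cons a w.1) fun he => ?_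
    have := congrArg (fun x : CoveringForest P => x.1.length) he
    simp [forestCons] at this
  · intro m hm hmw
    have h1 : m.1 <:+ a :: w.1 := hm.le
    have h2 : w.1 <:+ m.1 := hmw.le
    rcases List.suffix_cons_iff.mp h1 with he | hs
    · exact hm.ne' (Subtype.ext he)
    · exact hmw.ne (Subtype.ext (hs.sublist.antisymm h2.sublist))

lemma covBy_val_eq {c w : CoveringForest P} (h : c ⋖ w) :
    c.1 = forestPhi c :: w.1 := by
  obtain ⟨pre, hp⟩ := (forest_le_iff.mp h.1.le : w.1 <:+ c.1)
  have hpre : pre ≠ [] := by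
    rintro rfl
    exact h.1.ne' (Subtype.ext (by simpa using hp))
  obtain rfl | ⟨L, b, rfl⟩ := pre.eq_nil_or_concat'
  · exact absurd rfl hpre
  · have hs : b :: w.1 <:+ c.1 := ⟨L, by rw [← hp]; simp⟩
    set m : CoveringForest P := ⟨b :: w.1, forest_mem_of_suffix c (List.cons_ne_nil _ _) hs⟩
    have hcm : c ≤ m := hs
    have hmw : m < w := by
      refine lt_of_le_of_ne (List.suffix_cons b w.1) fun he => ?_
      have := congrArg (fun x : CoveringForest P => x.1.length) he
      simp [m] at this
    have hce : c = m := by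
      by_contra hne
      exact h.2 (lt_of_le_of_ne hcm hne) hmw
    have : c.1 = b :: w.1 := congrArg Subtype.val hce
    rw [this, forestPhi_eq this]

lemma covBy_phi {c w : CoveringForest P} (h : c ⋖ w) :
    forestPhi c ⋖ forestPhi w := by
  have hv := covBy_val_eq h
  have hc := c.2.2.1
  rw [hv, List.Chain', List.isChain_cons] at hc
  exact hc.1 _ (by rw [List.head?_eq_head w.2.1]; rfl)

lemma isMax_iff_singleton {w : CoveringForest P} :
    IsMax w ↔ ∃ p, w.1 = [p] := by
  constructor
  · intro hw
    obtain ⟨hne, -, -⟩ := w.2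
    rcases hl : w.1 with - | ⟨a, t⟩
    · exact absurd hl hne
    rcases t with - | ⟨b, s⟩
    · exact ⟨a, rfl⟩
    · exfalso
      set m : CoveringForest P :=
        ⟨b :: s, forest_mem_of_suffix w (List.cons_ne_nil _ _) ⟨[a], hl.symm⟩⟩
      have hwm : w ≤ m := forest_le_iff.mpr ⟨[a], hl.symm⟩
      have := (hw hwm : m ≤ w).sublist.length_le
      rw [hl] at this
      simp [m] at this
  · rintro ⟨p, hp⟩ v hv
    have h1 : v.1 <:+ [p] := hp ▸ forest_le_iff.mp hv
    have := h1.sublist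
    have hv1 : v.1 = [p] := by
      rcases List.sublist_cons_iff.mp this with h | h
      · exact absurd (List.sublist_nil.mp h) v.2.1
      · obtain ⟨l, hl1, hl2⟩ := h
        rw [hl1, List.sublist_nil.mp hl2]
    exact le_of_eq (Subtype.ext (hv1.trans hp.symm))

lemma singleton_mem (p : P) (hp : IsMax p) :
    ([p] : List P) ≠ [] ∧ ([p] : List P).Chain' (· ⋖ ·) ∧
      ∀ x, ([p] : List P).getLast? = some x → IsMax x := by
  refine ⟨List.cons_ne_nil _ _, List.isChain_singleton _, fun x hx => ?_⟩
  simp only [List.getLast?_singleton, Option.some_inj] at hx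
  exact hx ▸ hp

lemma forestPhi_mono : Monotone (forestPhi (P := P)) := by
  intro w v hwv
  have hpw : w.1.Pairwise (· < ·) :=
    List.isChain_iff_pairwise.mp (w.2.2.1.imp fun _ _ h => h.lt)
  obtain ⟨pre, hp⟩ := forest_le_iff.mp hwv
  have hmem : forestPhi v ∈ w.1 := by
    rw [← hp]
    exact List.mem_append_right _ (List.head_mem v.2.1)
  rcases hw : w.1 with - | ⟨a, t⟩
  · exact absurd hw w.2.1
  rw [forestPhi_eq hw]
  rw [hw] at hmem hpw
  rcases List.mem_cons.mp hmem with he | hmem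
  · exact he.ge
  · exact ((List.pairwise_cons.mp hpw).1 _ hmem).le

end Aux

/-- The natural map from the covering forest to `P` is a covering map; in particular, it is
an order-preserving surjection. -/
theorem stmt_6 (P : Type*) [PartialOrder P] [Fintype P] :
    (Set.BijOn (forestPhi (P := P)) {w | IsMax w} {p : P | IsMax p} ∧
      ∀ w : CoveringForest P,
        Set.BijOn forestPhi {c | c ⋖ w} {c : P | c ⋖ forestPhi w}) ∧
    Monotone (forestPhi (P := P)) ∧ Function.Surjective (forestPhi (P := P)) := by
  have surj : Function.Surjective (forestPhi (P := P)) := by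
    intro p
    induction p using WellFoundedGT.induction with
    | _ p ih =>
      by_cases hp : IsMax p
      · exact ⟨⟨[p], singleton_mem p hp⟩, forestPhi_eq rfl⟩
      · obtain ⟨q, hq⟩ := not_isMax_iff.mp hp
        obtain ⟨x, hx, -⟩ := exists_covBy_le_of_lt hq
        obtain ⟨w, hw⟩ := ih x hx.lt
        exact ⟨forestCons w p (hw ▸ hx), forestPhi_eq rfl⟩
  refine ⟨⟨⟨?_, ?_, ?_⟩, fun w => ⟨?_, ?_, ?_⟩⟩, forestPhi_mono, surj⟩
  · -- MapsTo on max
    intro w hw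
    obtain ⟨p, hp⟩ := isMax_iff_singleton.mp hw
    rw [Set.mem_setOf_eq, forestPhi_eq hp]
    exact w.2.2.2 p (by rw [hp, List.getLast?_singleton])
  · -- InjOn on max
    intro w hw v hv he
    obtain ⟨p, hp⟩ := isMax_iff_singleton.mp hw
    obtain ⟨q, hq⟩ := isMax_iff_singleton.mp hv
    rw [forestPhi_eq hp, forestPhi_eq hq] at he
    exact Subtype.ext (by rw [hp, hq, he])
  · -- SurjOn on max
    intro p hp
    exact ⟨⟨[p], singleton_mem p hp⟩, isMax_iff_singleton.mpr ⟨p, rfl⟩,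
      forestPhi_eq rfl⟩
  · -- MapsTo covers
    intro c hc
    exact covBy_phi hc
  · -- InjOn covers
    intro c hc c' hc' he
    exact Subtype.ext (by rw [covBy_val_eq hc, covBy_val_eq hc', he])
  · -- SurjOn covers
    intro a ha
    exact ⟨forestCons w a ha, forestCons_covBy w a ha, forestPhi_eq rfl⟩
end

section
/- Let P be a finite partial order, F its covering forest with covering map φ : F → P, and u, v ∈ F with φ(u) = φ(v). Then the map μ : ↓u → ↓v defined by μ(su) = sv (replacing the final segment u by v) is a well-defined order-isomorphism between the principal down-sets ↓u and ↓v, and satisfies φ ∘ μ = φ restricted to ↓u. -/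
section Aux

variable {P : Type*} [PartialOrder P]

lemma head?_eq_phi (w : CoveringForest P) : w.1.head? = some (forestPhi w) :=
  List.head?_eq_head w.2.1

lemma forest_valid (u v : CoveringForest P) (huv : forestPhi u = forestPhi v)
    (s : List P) (hs : (s ++ u.1).Chain' (· ⋖ ·)) :
    (s ++ v.1 ≠ [] ∧ (s ++ v.1).Chain' (· ⋖ ·) ∧
      ∀ x, (s ++ v.1).getLast? = some x → IsMax x) := by
  refine ⟨by simp [v.2.1], ?_, ?_⟩
  · simp only [List.Chain', List.isChain_append] at hs ⊢
    refine ⟨hs.1, v.2.2.1, ?_⟩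
    intro a ha b hb
    rw [head?_eq_phi v] at hb
    obtain rfl : forestPhi v = b := by simpa using hb
    rw [← huv]
    exact hs.2.2 a ha _ (by simp [head?_eq_phi u])
  · intro x hx
    apply v.2.2.2
    rw [List.getLast?_append] at hx
    rw [List.getLast?_eq_getLast v.2.1] at hx ⊢
    simpa using hx

/-- The substitution map. -/
noncomputable def substMap (u v : CoveringForest P) (huv : forestPhi u = forestPhi v)
    (x : {x : CoveringForest P // x ≤ u}) : {x : CoveringForest P // x ≤ v} := by
  refine ⟨⟨x.1.1.take (x.1.1.length - u.1.length) ++ v.1,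
    forest_valid u v huv _ ?_⟩, ⟨_, rfl⟩⟩
  obtain ⟨s, hs⟩ := x.2
  have : x.1.1.take (x.1.1.length - u.1.length) = s := by
    rw [← hs]; simp [List.take_left' rfl]
  rw [this, hs]; exact x.1.2.2.1

lemma substMap_spec (u v : CoveringForest P) (huv : forestPhi u = forestPhi v)
    (x : {x : CoveringForest P // x ≤ u}) (s : List P) (hx : x.1.1 = s ++ u.1) :
    (substMap u v huv x).1.1 = s ++ v.1 := by
  have : x.1.1.take (x.1.1.length - u.1.length) = s := by
    rw [hx]; simp [List.take_left' rfl]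
  simp [substMap, this]

end Aux

/-- If `u, v` are elements of the covering forest with `φ u = φ v`, then the substitution
`s ++ u ↦ s ++ v` is a well-defined order-isomorphism `↓u ≃o ↓v` commuting with `φ`. -/
theorem stmt_8 (P : Type*) [PartialOrder P] [Fintype P] (u v : CoveringForest P)
    (huv : forestPhi u = forestPhi v) :
    ∃ μ : {x : CoveringForest P // x ≤ u} ≃o {x : CoveringForest P // x ≤ v},
      (∀ (x : {x : CoveringForest P // x ≤ u}) (s : List P),
          x.1.1 = s ++ u.1 → (μ x).1.1 = s ++ v.1) ∧
        ∀ x : {x : CoveringForest P // x ≤ u}, forestPhi (μ x).1 = forestPhi x.1 := by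
  have key : ∀ (x : {x : CoveringForest P // x ≤ u}),
      ∃ s : List P, x.1.1 = s ++ u.1 := fun x => by
    obtain ⟨s, hs⟩ := x.2; exact ⟨s, hs.symm⟩
  have key' : ∀ (x : {x : CoveringForest P // x ≤ v}),
      ∃ s : List P, x.1.1 = s ++ v.1 := fun x => by
    obtain ⟨s, hs⟩ := x.2; exact ⟨s, hs.symm⟩
  refine ⟨⟨⟨substMap u v huv, substMap v u huv.symm, ?_, ?_⟩, ?_⟩, ?_, ?_⟩
  · intro x
    obtain ⟨s, hs⟩ := key x
    have h1 := substMap_spec u v huv x s hs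
    have h2 := substMap_spec v u huv.symm (substMap u v huv x) s h1
    exact Subtype.ext (Subtype.ext (h2.trans hs.symm))
  · intro x
    obtain ⟨s, hs⟩ := key' x
    have h1 := substMap_spec v u huv.symm x s hs
    have h2 := substMap_spec u v huv (substMap v u huv.symm x) s h1
    exact Subtype.ext (Subtype.ext (h2.trans hs.symm))
  · intro x y
    obtain ⟨s, hs⟩ := key x
    obtain ⟨t, ht⟩ := key y
    have hx := substMap_spec u v huv x s hs
    have hy := substMap_spec u v huv y t ht
    show ((substMap u v huv y).1.1 <:+ (substMap u v huv x).1.1) ↔ (y.1.1 <:+ x.1.1)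
    rw [hx, hy, hs, ht]
    constructor
    · rintro ⟨p, hp⟩
      have : p ++ t = s := by
        apply List.append_cancel_right (as := p ++ t) (bs := v.1)
        rw [← hp, List.append_assoc]
      exact ⟨p, by rw [← this, List.append_assoc]⟩
    · rintro ⟨p, hp⟩
      have : p ++ t = s := by
        apply List.append_cancel_right (as := p ++ t) (bs := u.1)
        rw [← hp, List.append_assoc]
      exact ⟨p, by rw [← this, List.append_assoc]⟩
  · intro x s hx
    exact substMap_spec u v huv x s hx
  · intro x
    obtain ⟨s, hs⟩ := key x
    have hx := substMap_spec u v huv x s hs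
    have h1 : (substMap u v huv x).1.1.head? = some (forestPhi (substMap u v huv x).1) :=
      head?_eq_phi _
    have h2 : x.1.1.head? = some (forestPhi x.1) := head?_eq_phi _
    rw [hx, List.head?_append, head?_eq_phi v] at h1
    rw [hs, List.head?_append, head?_eq_phi u] at h2
    show forestPhi (substMap u v huv x).1 = forestPhi x.1
    cases s with
    | nil => simp at h1 h2; rw [← h1, ← h2, huv]
    | cons a t => simp at h1 h2; rw [← h1, ← h2]
end

section
/- Let S be a finite join-semilattice. There exists a finite algebra A on the underlying set of S (with the join operation together with a family of unary operations) such that the set of nonempty subuniverses of A, ordered by inclusion, is order-isomorphic to S. Concretely: the subsets of S closed under join and under all the unary maps f_{ts} (for covering pairs s ≺ t, where f_{ts} sends t to s and fixes everything else) are exactly the principal down-sets ↓x, and x ↦ ↓x is an order-isomorphism from S to this family ordered by inclusion. -/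
/-- For a covering pair `s ⋖ t` in a finite join-semilattice, `fts t s` sends `t` to `s`
and fixes everything else. -/
def fts {S : Type*} [SemilatticeSup S] [DecidableEq S] (t s : S) (x : S) : S :=
  if x = t then s else x

/-- A subuniverse of the Birkhoff–Frink algebra on `S`: a subset closed under join and
under all the unary maps `f_{ts}` for covering pairs `s ⋖ t`. -/
def IsSubuniverse {S : Type*} [SemilatticeSup S] [DecidableEq S] (B : Set S) : Prop :=
  (∀ x ∈ B, ∀ y ∈ B, x ⊔ y ∈ B) ∧ ∀ s t : S, s ⋖ t → ∀ x ∈ B, fts t s x ∈ B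

private lemma down_closed {S : Type*} [SemilatticeSup S] [Fintype S] [DecidableEq S]
    {B : Set S} (hB : IsSubuniverse B) : ∀ x ∈ B, ∀ y ≤ x, y ∈ B := by
  classical
  haveI : LocallyFiniteOrder S := Fintype.toLocallyFiniteOrder
  intro x
  induction x using WellFoundedLT.induction with
  | ind x ih =>
    intro hx y hy
    rcases eq_or_lt_of_le hy with rfl | hlt
    · exact hx
    obtain ⟨z, hyz, hz⟩ := exists_le_covBy_of_lt hlt
    have hzB : z ∈ B := by
      have := hB.2 z x hz x hx
      simpa [fts] using this
    exact ih z hz.lt hzB y hyz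

/-- Birkhoff–Frink: for a finite join-semilattice `S`, the nonempty subuniverses of the
algebra `⟨S; ⊔, {f_{ts}}⟩` are exactly the principal down-sets `↓x`, and `x ↦ ↓x` is an
order-isomorphism from `S` onto this family ordered by inclusion. -/
theorem stmt_9 (S : Type*) [SemilatticeSup S] [Fintype S] [DecidableEq S] :
    (∀ B : Set S, (B.Nonempty ∧ IsSubuniverse B) ↔ ∃ x : S, B = Set.Iic x) ∧
      ∃ e : S ≃o {B : Set S // B.Nonempty ∧ IsSubuniverse B},
        ∀ x : S, (e x : Set S) = Set.Iic x := by
  classical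
  have hIic : ∀ x : S, (Set.Iic x).Nonempty ∧ IsSubuniverse (Set.Iic x) := by
    intro x
    refine ⟨⟨x, le_refl x⟩, ⟨fun a ha b hb => sup_le ha hb, fun s t hst a ha => ?_⟩⟩
    unfold fts
    split
    next h => exact le_trans hst.le (h ▸ ha)
    next => exact ha
  have key : ∀ B : Set S, (B.Nonempty ∧ IsSubuniverse B) ↔ ∃ x : S, B = Set.Iic x := by
    intro B
    constructor
    · rintro ⟨⟨b, hb⟩, hB⟩
      -- let x be the join of all elements of B
      have hBf : B.toFinset.Nonempty := ⟨b, Set.mem_toFinset.2 hb⟩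
      have gen : ∀ t : Finset S, ∀ ht : t.Nonempty, ↑t ⊆ B → t.sup' ht id ∈ B := by
        intro t ht
        induction ht using Finset.Nonempty.cons_induction with
        | singleton a => intro h; simpa using h (by simp)
        | cons a s ha hs ih =>
            intro h
            rw [Finset.sup'_cons hs]
            exact hB.1 a (h (by simp)) _ (ih fun y hy => h (by simp [hy]))
      have hxB : B.toFinset.sup' hBf id ∈ B :=
        gen _ hBf (fun y hy => Set.mem_toFinset.1 hy)
      refine ⟨_, Set.Subset.antisymm (fun a ha => ?_)
        (fun a ha => down_closed hB _ hxB a ha)⟩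
      exact Finset.le_sup' id (Set.mem_toFinset.2 ha)
    · rintro ⟨x, rfl⟩; exact hIic x
  refine ⟨key, ?_⟩
  have hinj : Function.Injective (fun x : S => (⟨Set.Iic x, hIic x⟩ :
      {B : Set S // B.Nonempty ∧ IsSubuniverse B})) := by
    intro a b hab
    exact Set.Iic_injective (by simpa using congrArg Subtype.val hab)
  refine ⟨{ toFun := fun x => ⟨Set.Iic x, hIic x⟩,
            invFun := fun B => Classical.choose ((key B.1).mp B.2),
            left_inv := ?_, right_inv := ?_, map_rel_iff' := ?_ }, fun x => rfl⟩
  · intro x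
    have h := Classical.choose_spec ((key (Set.Iic x)).mp (hIic x))
    exact (Set.Iic_injective h.symm)
  · intro B
    have h := Classical.choose_spec ((key B.1).mp B.2)
    exact Subtype.ext h.symm
  · intro a b
    simp [Subtype.mk_le_mk, Set.Iic_subset_Iic]
end

section
/- Let S be a finite join-semilattice. A nonempty subset B of S is closed under all the maps f_{ts} (for covering pairs s ≺ t in S) if and only if B is a down-set of S. -/
/-- A nonempty subset of a finite join-semilattice is closed under all the maps `f_{ts}`
(for covering pairs `s ⋖ t`) if and only if it is a down-set. -/
theorem stmt_10 (S : Type*) [SemilatticeSup S] [Fintype S] [DecidableEq S] (B : Set S)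
    (hB : B.Nonempty) :
    (∀ s t : S, s ⋖ t → ∀ x ∈ B, fts t s x ∈ B) ↔ IsLowerSet B := by
  constructor
  · intro h
    have key : ∀ y x : S, x ≤ y → y ∈ B → x ∈ B := by
      intro y
      induction y using WellFoundedLT.induction with
      | ind y ih =>
        intro x hxy hy
        rcases eq_or_lt_of_le hxy with rfl | hlt
        · exact hy
        · obtain ⟨z, hxz, hzy⟩ := exists_le_covBy_of_lt hlt
          have hz : z ∈ B := by
            have := h z y hzy y hy
            simpa [fts] using this
          exact ih z hzy.lt x hxz hz
    exact fun x y hxy hy => key x y hxy hy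
  · intro h s t hst x hx
    by_cases hxt : x = t
    · simp only [fts, hxt, if_pos rfl]
      exact h hst.le (hxt ▸ hx)
    · simpa [fts, hxt] using hx
end

section
/- Let A = ⟨A; f⟩ be a finite monounary algebra (a finite set with a single unary operation) and let n be the least common multiple of the lengths of the cycles of A. If n = 1 (all cycles are fixed points), then any two finite algebras in the variety generated by A are homomorphically equivalent: every finite model B of the equational theory of A contains a fixed point of f, and hence there are homomorphisms between any two such models in both directions. -/
/-- In a finite algebra where every cycle is a fixed point, `f^[n+1] = f^[n]` for
`n = card A`. -/
lemma aux_stable {A : Type*} [Fintype A] (f : A → A)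
    (hcyc : ∀ a : A, (∃ k : ℕ, 0 < k ∧ f^[k] a = a) → f a = a) :
    ∀ a : A, f^[Fintype.card A + 1] a = f^[Fintype.card A] a := by
  intro a
  -- pigeonhole on n ↦ f^[n] a for n ∈ Fin (card A + 1)
  obtain ⟨i, j, hne, hij⟩ := Fintype.exists_ne_map_eq_of_card_lt
    (fun n : Fin (Fintype.card A + 1) => f^[(n : ℕ)] a) (by simp)
  wlog hlt : (i : ℕ) < (j : ℕ) generalizing i j
  · exact this j i hne.symm hij.symm (by omega)
  -- f^[i] a is on a cycle of length j - i, hence a fixed point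
  have hfix : f (f^[(i : ℕ)] a) = f^[(i : ℕ)] a := by
    apply hcyc
    exact ⟨(j : ℕ) - i, by omega, by
      rw [← Function.iterate_add_apply]
      have : (j : ℕ) - i + i = j := by omega
      rw [this]; exact hij.symm⟩
  -- then f^[m] a = f^[i] a for all m ≥ i
  have key : ∀ m : ℕ, f^[(i : ℕ) + m] a = f^[(i : ℕ)] a := by
    intro m
    induction m with
    | zero => rfl
    | succ k ih =>
      have : (i : ℕ) + (k + 1) = 1 + ((i : ℕ) + k) := by omega
      rw [this, Function.iterate_add_apply, ih, Function.iterate_one, hfix]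
  have h1 := key (Fintype.card A - i)
  have h2 := key (Fintype.card A + 1 - i)
  have e1 : (i : ℕ) + (Fintype.card A - i) = Fintype.card A := by omega
  have e2 : (i : ℕ) + (Fintype.card A + 1 - i) = Fintype.card A + 1 := by omega
  rw [e1] at h1; rw [e2] at h2
  rw [h1, h2]

/-- If every cycle of a finite monounary algebra `⟨A; f⟩` is a fixed point (the lcm of the
cycle lengths is `1`), then every finite model of the equational theory of `A` contains a
fixed point, and any two finite nonempty models are homomorphically equivalent. -/
theorem stmt_12 (A : Type*) [Fintype A] [Nonempty A] (f : A → A)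
    (hcyc : ∀ a : A, (∃ k : ℕ, 0 < k ∧ f^[k] a = a) → f a = a)
    (B C : Type*) [Fintype B] [Fintype C] [Nonempty B] [Nonempty C]
    (g : B → B) (h : C → C)
    (hB : ∀ j k : ℕ, (∀ a : A, f^[j] a = f^[k] a) → ∀ b : B, g^[j] b = g^[k] b)
    (hC : ∀ j k : ℕ, (∀ a : A, f^[j] a = f^[k] a) → ∀ c : C, h^[j] c = h^[k] c) :
    (∃ b : B, g b = b) ∧
      (∃ φ : B → C, ∀ x : B, φ (g x) = h (φ x)) ∧
      (∃ ψ : C → B, ∀ x : C, ψ (h x) = g (ψ x)) := by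
  set N := Fintype.card A with hN
  have hA : ∀ a : A, f^[N + 1] a = f^[N] a := aux_stable f hcyc
  obtain ⟨b₀⟩ := ‹Nonempty B›
  obtain ⟨c₀⟩ := ‹Nonempty C›
  have hgfix : g (g^[N] b₀) = g^[N] b₀ := by
    have := hB (N + 1) N hA b₀
    rwa [Function.iterate_succ_apply'] at this
  have hhfix : h (h^[N] c₀) = h^[N] c₀ := by
    have := hC (N + 1) N hA c₀
    rwa [Function.iterate_succ_apply'] at this
  exact ⟨⟨g^[N] b₀, hgfix⟩,
    ⟨fun _ => h^[N] c₀, fun x => hhfix.symm⟩,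
    ⟨fun _ => g^[N] b₀, fun x => hgfix.symm⟩⟩
end

section
/- Let Q be a finite algebra such that every nontrivial finite member of the variety Var(Q) is isomorphic to a finite product of subalgebras of Q (e.g., Q quasi-primal). Fix a transversal 𝒫 of Sub(Q)/≡ ordered by the existence of homomorphisms, with Q as top element. Then for each nontrivial finite A ∈ Var(Q) there is a nonempty up-set 𝒰 of 𝒫 with A homomorphically equivalent to ∏𝒰. -/
open FirstOrder FirstOrder.Language FirstOrder.Language.Structure

namespace Stmt14

variable {L : Language}

/-- The pointwise structure on a product of structures. -/
instance piStructure {ι : Type*} (M : ι → Type*) [∀ i, L.Structure (M i)] :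
    L.Structure (∀ i, M i) where
  funMap f x i := funMap f fun j => x j i
  RelMap r x := ∀ i, RelMap r fun j => x j i

/-- Homomorphic equivalence: homomorphisms exist in both directions. -/
def HomEquiv (L : Language) (M N : Type*) [L.Structure M] [L.Structure N] : Prop :=
  Nonempty (M →[L] N) ∧ Nonempty (N →[L] M)

/-- `A` lies in the variety generated by `Q`: every equation valid in `Q` is valid
in `A`. -/
def InVar (L : Language) (Q : Type*) [L.Structure Q] (A : Type*) [L.Structure A] : Prop :=
  ∀ t₁ t₂ : L.Term ℕ, (∀ v : ℕ → Q, t₁.realize v = t₂.realize v) →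
    ∀ v : ℕ → A, t₁.realize v = t₂.realize v

/-- Projection out of a product is a homomorphism. -/
def projHom {ι : Type*} (M : ι → Type*) [∀ i, L.Structure (M i)] (i : ι) :
    (∀ j, M j) →[L] M i where
  toFun x := x i
  map_fun' _ _ := rfl
  map_rel' _ _ h := h i

/-- Tupling of homomorphisms into a product. -/
def piHom {ι : Type*} (M : ι → Type*) [∀ i, L.Structure (M i)] {N : Type*} [L.Structure N]
    (g : ∀ i, N →[L] M i) : N →[L] ∀ i, M i where
  toFun x i := g i x
  map_fun' f x := funext fun i => (g i).map_fun f x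
  map_rel' r x h i := (g i).map_rel r x h

/-- Let `Q` be a finite algebra such that every nontrivial finite member of `Var(Q)` is
isomorphic to a finite product of subalgebras of `Q` (e.g. `Q` quasi-primal), and let `Ps`
be a transversal of `Sub(Q)/≡` with `Q` (i.e. `⊤`) as top element. Then every nontrivial
finite `A ∈ Var(Q)` is homomorphically equivalent to the product of a nonempty up-set
of `Ps`. -/
theorem stmt_14 (L : Language) (Q : Type) [L.Structure Q] [Fintype Q]
    (hprod : ∀ (A : Type) [Fintype A] [L.Structure A], InVar L Q A → Nontrivial A →
      ∃ (n : ℕ) (S : Fin n → L.Substructure Q), Nonempty (A ≃[L] ∀ i, (S i : Type)))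
    (Ps : Set (L.Substructure Q))
    (hQtop : (⊤ : L.Substructure Q) ∈ Ps)
    (hrep : ∀ S : L.Substructure Q, ∃ T ∈ Ps, HomEquiv L S T)
    (huniq : ∀ T₁ ∈ Ps, ∀ T₂ ∈ Ps, HomEquiv L T₁ T₂ → T₁ = T₂)
    (htriv : ∀ T ∈ Ps, (∃ x : T, ∀ n (f : L.Functions n) (v : Fin n → T),
        funMap f v = x) → T = ⊤)
    (A : Type) [Fintype A] [L.Structure A] (hA : InVar L Q A) (hAnt : Nontrivial A) :
    ∃ Us : Set (L.Substructure Q), Us ⊆ Ps ∧ Us.Nonempty ∧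
      (∀ T₁ ∈ Us, ∀ T₂ ∈ Ps, Nonempty (T₁ →[L] T₂) → T₂ ∈ Us) ∧
      HomEquiv L A (∀ S : Us, (S.1 : Type)) := by
  classical
  obtain ⟨n, S, ⟨e⟩⟩ := hprod A hA hAnt
  -- n is positive
  obtain ⟨a, b, hab⟩ := hAnt
  have heab : e a ≠ e b := fun h => hab (e.injective h)
  have : ∃ i, e a i ≠ e b i := by
    by_contra h
    push_neg at h
    exact heab (funext h)
  obtain ⟨i₀, _⟩ := this
  -- representatives
  choose T hTPs hTeq using fun i : Fin n => hrep (S i)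
  refine ⟨{U | U ∈ Ps ∧ ∃ i : Fin n, Nonempty ((S i : Type) →[L] U)}, fun U hU => hU.1,
    ⟨T i₀, hTPs i₀, i₀, (hTeq i₀).1⟩, ?_, ?_, ?_⟩
  · rintro T₁ ⟨_, i, ⟨f⟩⟩ T₂ hT₂ ⟨g⟩
    exact ⟨hT₂, i, ⟨g.comp f⟩⟩
  · -- A → product over Us
    refine ⟨piHom _ fun U => ?_⟩
    exact U.2.2.choose_spec.some.comp
      ((projHom (fun i => (S i : Type)) U.2.2.choose).comp e.toHom)
  · -- product over Us → A
    refine ⟨e.symm.toHom.comp (piHom _ fun i => ?_)⟩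
    exact (hTeq i).2.some.comp
      (projHom _ (⟨T i, hTPs i, i, (hTeq i).1⟩ :
        {U | U ∈ Ps ∧ ∃ i : Fin n, Nonempty ((S i : Type) →[L] U)}))

end Stmt14
end

section
/- Let σ be a universal first-order sentence in the language of lattices that fails in some lattice L. Then σ fails in some finite lattice. (Proof idea: take witnesses, close under the finitely many subterms of σ to get a finite subposet A of L, and take the Dedekind–MacNeille completion of A, which preserves all joins and meets of A that exist in L among elements of A.) -/
open FirstOrder

/-- The language of lattices: two binary function symbols (`⊔` for `true`, `⊓` for
`false`) and no relation symbols. -/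
def latLang : Language :=
  ⟨fun n => match n with | 2 => Bool | _ => Empty, fun _ => Empty⟩

/-- Every lattice is a structure for the language of lattices. -/
def latStructure (M : Type*) [Lattice M] : latLang.Structure M where
  funMap {n} f x :=
    match n, f, x with
    | 2, true, x => x 0 ⊔ x 1
    | 2, false, x => x 0 ⊓ x 1
  RelMap {n} r _ := Empty.elim r

namespace Stmt17

attribute [local instance] latStructure

open FirstOrder.Language FirstOrder.Language.BoundedFormula

variable {M : Type*} [Lattice M] [DecidableEq M]

/-- the closure of a finite set under (finitary, nonempty) meets -/
noncomputable def meetCl (S : Finset M) : Finset M :=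
  ((S.powerset.erase ∅).attach).image fun t =>
    t.1.inf' (Finset.nonempty_iff_ne_empty.2 (Finset.mem_erase.1 t.2).1) id

lemma mem_meetCl {S : Finset M} {a : M} :
    a ∈ meetCl S ↔ ∃ (t : Finset M) (ht : t.Nonempty), t ⊆ S ∧ a = t.inf' ht id := by
  constructor
  · intro h
    obtain ⟨t, _, rfl⟩ := Finset.mem_image.1 h
    exact ⟨t.1, _, Finset.mem_powerset.1 (Finset.mem_erase.1 t.2).2, rfl⟩
  · rintro ⟨t, ht, hts, rfl⟩
    refine Finset.mem_image.2 ⟨⟨t, ?_⟩, Finset.mem_attach _ _, rfl⟩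
    exact Finset.mem_erase.2 ⟨Finset.nonempty_iff_ne_empty.1 ht, Finset.mem_powerset.2 hts⟩

lemma subset_meetCl {S : Finset M} : S ⊆ meetCl S := by
  intro a ha
  exact mem_meetCl.2 ⟨{a}, Finset.singleton_nonempty a, Finset.singleton_subset_iff.2 ha,
    by simp⟩

lemma inf_mem_meetCl {S : Finset M} {a b : M} (ha : a ∈ meetCl S) (hb : b ∈ meetCl S) :
    a ⊓ b ∈ meetCl S := by
  obtain ⟨t, ht, hts, rfl⟩ := mem_meetCl.1 ha
  obtain ⟨u, hu, hus, rfl⟩ := mem_meetCl.1 hb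
  exact mem_meetCl.2 ⟨t ∪ u, ht.mono Finset.subset_union_left,
    Finset.union_subset hts hus, (Finset.inf'_union ht hu _).symm⟩

lemma meetCl_le {S : Finset M} {a : M} (ha : a ∈ meetCl S) (hS : S.Nonempty) :
    a ≤ S.sup' hS id := by
  obtain ⟨t, ht, hts, rfl⟩ := mem_meetCl.1 ha
  obtain ⟨x, hx⟩ := ht
  exact (Finset.inf'_le id hx).trans (Finset.le_sup' id (hts hx))

variable (S : Finset M) (hS : S.Nonempty)

noncomputable def DFin : Finset M := insert (S.sup' hS id) (meetCl S)

lemma le_of_mem_DFin {a : M} (ha : a ∈ DFin S hS) : a ≤ S.sup' hS id := by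
  rcases Finset.mem_insert.1 ha with h | h
  · exact h.le
  · exact meetCl_le h hS

lemma inf_mem_DFin {a b : M} (ha : a ∈ DFin S hS) (hb : b ∈ DFin S hS) :
    a ⊓ b ∈ DFin S hS := by
  rcases Finset.mem_insert.1 ha with h | h
  · rw [show a ⊓ b = b from inf_eq_right.2 ((le_of_mem_DFin S hS hb).trans_eq h.symm)]
    exact hb
  · rcases Finset.mem_insert.1 hb with h' | h'
    · rw [show a ⊓ b = a from inf_eq_left.2 ((le_of_mem_DFin S hS ha).trans_eq h'.symm)]
      exact ha
    · exact Finset.mem_insert_of_mem (inf_mem_meetCl h h')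

lemma subset_DFin : S ⊆ DFin S hS := fun a ha =>
  Finset.mem_insert_of_mem (subset_meetCl ha)

/-- The carrier of the finite lattice. -/
def NCar : Type _ := {x : M // x ∈ DFin S hS}

noncomputable instance : Fintype (NCar S hS) := by unfold NCar; infer_instance

/-- the top element -/
def NCar.topEl : NCar S hS := ⟨S.sup' hS id, Finset.mem_insert_self _ _⟩

open scoped Classical in
/-- the set of common upper bounds -/
noncomputable def ubs (a b : NCar S hS) : Finset (NCar S hS) :=
  Finset.univ.filter fun c => a.1 ≤ c.1 ∧ b.1 ≤ c.1

lemma mem_ubs {a b c : NCar S hS} : c ∈ ubs S hS a b ↔ a.1 ≤ c.1 ∧ b.1 ≤ c.1 := by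
  classical simp [ubs]

lemma ubs_nonempty (a b : NCar S hS) : (ubs S hS a b).Nonempty :=
  ⟨NCar.topEl S hS, (mem_ubs S hS).2 ⟨le_of_mem_DFin S hS a.2, le_of_mem_DFin S hS b.2⟩⟩

lemma inf'_val_mem (T : Finset (NCar S hS)) (hT : T.Nonempty) :
    T.inf' hT (fun c => c.1) ∈ DFin S hS := by
  induction hT using Finset.Nonempty.cons_induction with
  | singleton a => simpa using a.2
  | cons a s ha hs ih => rw [Finset.inf'_cons hs]; exact inf_mem_DFin S hS a.2 ih

noncomputable instance : Lattice (NCar S hS) where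
  le a b := a.1 ≤ b.1
  le_refl a := le_refl a.1
  le_trans a b c h1 h2 := le_trans (α := M) h1 h2
  le_antisymm a b h1 h2 := Subtype.ext (le_antisymm h1 h2)
  inf a b := ⟨a.1 ⊓ b.1, inf_mem_DFin S hS a.2 b.2⟩
  inf_le_left a b := inf_le_left (a := a.1) (b := b.1)
  inf_le_right a b := inf_le_right (a := a.1) (b := b.1)
  le_inf a b c h1 h2 := by exact le_inf (α := M) h1 h2
  sup a b := ⟨(ubs S hS a b).inf' (ubs_nonempty S hS a b) (fun c => c.1),
      inf'_val_mem S hS _ _⟩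
  le_sup_left a b :=
    Finset.le_inf' (ubs_nonempty S hS a b) _ (fun c hc => ((mem_ubs S hS).1 hc).1)
  le_sup_right a b :=
    Finset.le_inf' (ubs_nonempty S hS a b) _ (fun c hc => ((mem_ubs S hS).1 hc).2)
  sup_le a b c h1 h2 :=
    Finset.inf'_le _ ((mem_ubs S hS).2 ⟨h1, h2⟩)

lemma NCar.le_iff {a b : NCar S hS} : a ≤ b ↔ a.1 ≤ b.1 := Iff.rfl

lemma NCar.coe_inf (a b : NCar S hS) : (a ⊓ b).1 = a.1 ⊓ b.1 := rfl

lemma NCar.sup_eq {a b c : NCar S hS} (h : a.1 ⊔ b.1 = c.1) : a ⊔ b = c := by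
  refine le_antisymm (sup_le ?_ ?_) ?_
  · exact (NCar.le_iff S hS).2 (le_sup_left.trans_eq h)
  · exact (NCar.le_iff S hS).2 (le_sup_right.trans_eq h)
  · refine (NCar.le_iff S hS).2 ?_
    rw [← h]
    exact sup_le ((NCar.le_iff S hS).1 (le_sup_left : a ≤ a ⊔ b))
      ((NCar.le_iff S hS).1 (le_sup_right : b ≤ a ⊔ b))


section Transfer

lemma funMap_sup (N : Type*) [Lattice N] (x : Fin 2 → N) :
    @Structure.funMap latLang N (latStructure N) 2 true x = x 0 ⊔ x 1 := rfl

lemma funMap_inf (N : Type*) [Lattice N] (x : Fin 2 → N) :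
    @Structure.funMap latLang N (latStructure N) 2 false x = x 0 ⊓ x 1 := rfl

variable {n : ℕ} (z : Empty ⊕ Fin n → M)

/-- the set of values of all subterms of a term -/
noncomputable def tvals : latLang.Term (Empty ⊕ Fin n) → Finset M
  | .var i => {z i}
  | .func f ts =>
      insert (@Term.realize latLang M (latStructure M) _ z (.func f ts))
        (Finset.univ.sup fun i => tvals (ts i))

lemma realize_mem_tvals (t : latLang.Term (Empty ⊕ Fin n)) :
    @Term.realize latLang M (latStructure M) _ z t ∈ tvals z t := by
  cases t with
  | var i => simp [tvals, Term.realize]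
  | func f ts => exact Finset.mem_insert_self _ _

lemma tvals_subset {l : ℕ} (f : latLang.Functions l) (ts : Fin l → latLang.Term (Empty ⊕ Fin n))
    (i : Fin l) : tvals z (ts i) ⊆ tvals z (.func f ts) := by
  intro a ha
  exact Finset.mem_insert_of_mem (Finset.mem_sup.2 ⟨i, Finset.mem_univ i, ha⟩)

/-- lift an element of `M` to the finite lattice -/
noncomputable def lift (x : M) : NCar S hS :=
  if h : x ∈ DFin S hS then ⟨x, h⟩ else NCar.topEl S hS

lemma lift_coe {x : M} (h : x ∈ DFin S hS) : (lift S hS x).1 = x := by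
  simp [lift, h]

lemma term_transfer (t : latLang.Term (Empty ⊕ Fin n))
    (ht : tvals z t ⊆ DFin S hS) :
    (@Term.realize latLang (NCar S hS) (latStructure _) _ (fun i => lift S hS (z i)) t).1
      = @Term.realize latLang M (latStructure M) _ z t := by
  induction t with
  | var i =>
      exact lift_coe S hS (ht (by simp [tvals]))
  | @func l f ts ih =>
      have hsub : ∀ i, tvals z (ts i) ⊆ DFin S hS :=
        fun i => (tvals_subset z f ts i).trans ht
      have hmem : @Term.realize latLang M (latStructure M) _ z (.func f ts) ∈ DFin S hS :=
        ht (realize_mem_tvals z _)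
      match l, f with
      | 2, true =>
          show ((ts 0).realize (fun i => lift S hS (z i)) ⊔
            (ts 1).realize (fun i => lift S hS (z i))).1 = (ts 0).realize z ⊔ (ts 1).realize z
          have hX : @Term.realize latLang M (latStructure M) _ z (@Term.func latLang _ 2 true ts)
              = Term.realize z (ts 0) ⊔ Term.realize z (ts 1) := by
            rfl
          have hs := NCar.sup_eq S hS
            (a := (ts 0).realize (fun i => lift S hS (z i)))
            (b := (ts 1).realize (fun i => lift S hS (z i)))
            (c := ⟨_, hmem⟩)
            (by rw [ih 0 (hsub 0), ih 1 (hsub 1)]; exact hX.symm)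
          rw [hs]
          exact hX
      | 2, false =>
          show ((ts 0).realize (fun i => lift S hS (z i)) ⊓
            (ts 1).realize (fun i => lift S hS (z i))).1 = (ts 0).realize z ⊓ (ts 1).realize z
          rw [NCar.coe_inf, ih 0 (hsub 0), ih 1 (hsub 1)]

/-- the set of values of all terms occurring in a quantifier-free formula -/
noncomputable def fvals : latLang.BoundedFormula Empty n → Finset M
  | .falsum => ∅
  | .equal t₁ t₂ => tvals z t₁ ∪ tvals z t₂
  | .rel _ _ => ∅
  | .imp f g => fvals f ∪ fvals g
  | .all _ => ∅

lemma qf_transfer (ψ : latLang.BoundedFormula Empty n) (hψ : ψ.IsQF)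
    (xsM : Fin n → M) (vM : Empty → M)
    (hsub : fvals (Sum.elim vM xsM) ψ ⊆ DFin S hS) :
    (@BoundedFormula.Realize latLang (NCar S hS) (latStructure _) Empty n ψ
        (fun e => e.elim) (fun i => lift S hS (xsM i)) ↔
      @BoundedFormula.Realize latLang M (latStructure M) Empty n ψ vM xsM) := by
  have key : (Sum.elim (fun e : Empty => (e.elim : NCar S hS))
      (fun i => lift S hS (xsM i))) = fun i => lift S hS (Sum.elim vM xsM i) := by
    funext i
    cases i with
    | inl e => exact e.elim
    | inr j => rfl
  induction hψ with
  | falsum => exact Iff.rfl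
  | of_isAtomic h =>
      cases h with
      | equal t₁ t₂ =>
          have h1 := term_transfer S hS (Sum.elim vM xsM) t₁
            ((Finset.subset_union_left).trans hsub)
          have h2 := term_transfer S hS (Sum.elim vM xsM) t₂
            ((Finset.subset_union_right).trans hsub)
          show Term.realize _ t₁ = Term.realize _ t₂ ↔
            Term.realize _ t₁ = Term.realize _ t₂
          rw [key]
          constructor
          · intro h
            rw [← h1, ← h2, h]
          · intro h
            exact Subtype.ext (by rw [h1, h2, h])
      | rel R ts => exact Empty.elim R
  | imp h₁ h₂ ih₁ ih₂ =>
      have s₁ : fvals (Sum.elim vM xsM) _ ⊆ DFin S hS :=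
        (Finset.subset_union_left).trans hsub
      have s₂ : fvals (Sum.elim vM xsM) _ ⊆ DFin S hS :=
        (Finset.subset_union_right).trans hsub
      exact imp_congr (ih₁ s₁) (ih₂ s₂)

end Transfer


section EmptyCase

lemma term_empty (t : latLang.Term (Empty ⊕ Fin 0)) : False := by
  induction t with
  | var i =>
      rcases i with e | j
      · exact e.elim
      · exact j.elim0
  | @func l f ts ih =>
      rcases l with _ | _ | _ | l
      · exact Empty.elim f
      · exact Empty.elim f
      · exact ih 0
      · exact Empty.elim f

lemma qf_empty {A : Type*} {B : Type*} [Lattice A] [Lattice B]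
    (ψ : latLang.BoundedFormula Empty 0) (hψ : ψ.IsQF)
    (vA : Empty → A) (xsA : Fin 0 → A) (vB : Empty → B) (xsB : Fin 0 → B) :
    (@BoundedFormula.Realize latLang A (latStructure A) Empty 0 ψ vA xsA ↔
      @BoundedFormula.Realize latLang B (latStructure B) Empty 0 ψ vB xsB) := by
  induction hψ with
  | falsum => exact Iff.rfl
  | of_isAtomic h =>
      cases h with
      | equal t₁ t₂ => exact (term_empty t₁).elim
      | rel R ts => exact Empty.elim R
  | imp h₁ h₂ ih₁ ih₂ => exact imp_congr ih₁ ih₂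

end EmptyCase

end Stmt17

open FirstOrder.Language FirstOrder.Language.BoundedFormula Stmt17 in
attribute [local instance] latStructure in
/-- If a universal first-order sentence in the language of lattices fails in some lattice,
then it fails in some finite lattice. -/
theorem stmt_17 (n : ℕ) (φ : latLang.BoundedFormula Empty n) (hqf : φ.IsQF)
    (M : Type*) [Lattice M]
    (hfail : ¬ @FirstOrder.Language.Sentence.Realize latLang M (latStructure M) φ.alls) :
    ∃ (N : Type) (instN : Lattice N) (_ : Fintype N),
      ¬ @FirstOrder.Language.Sentence.Realize latLang N (@latStructure N instN) φ.alls := by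
  classical
  letI : latLang.Structure M := latStructure M
  have h2 : ¬ ∀ xs : Fin n → M, φ.Realize (default : Empty → M) xs :=
    fun h => hfail (realize_alls.2 h)
  obtain ⟨xs, hxs⟩ := not_forall.1 h2
  rcases isEmpty_or_nonempty M with hM | hM
  · -- M is empty, so n = 0 and the formula is term-free
    have hn : n = 0 := by
      rcases n with _ | m
      · rfl
      · exact (hM.false (xs 0)).elim
    subst hn
    refine ⟨PUnit, inferInstance, inferInstance, fun h => ?_⟩
    have h0 := realize_alls.1 h default
    exact hxs ((qf_empty φ hqf default default (default : Empty → M) xs).1 h0)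
  · obtain ⟨m0⟩ := hM
    set z : Empty ⊕ Fin n → M := Sum.elim (default : Empty → M) xs with hz
    set S : Finset M := insert m0 (fvals z φ) with hSdef
    have hS : S.Nonempty := ⟨m0, Finset.mem_insert_self _ _⟩
    have hsub : fvals z φ ⊆ DFin S hS :=
      fun a ha => subset_DFin S hS (Finset.mem_insert_of_mem ha)
    set K := NCar S hS with hK
    -- the sentence fails in the finite lattice K
    have hfailK : ¬ @FirstOrder.Language.Sentence.Realize latLang K (latStructure K) φ.alls := by
      intro hKr
      have hr := realize_alls.1 hKr (fun i => lift S hS (xs i))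
      have hdef : (default : Empty → K) = fun e => e.elim := funext fun e => e.elim
      rw [hdef] at hr
      exact hxs ((qf_transfer S hS φ hqf xs (default : Empty → M) hsub).1 hr)
    -- shrink K down to `Type 0`
    haveI hsmall : Small.{0} K := ⟨⟨Fin (Fintype.card K), ⟨Fintype.equivFin K⟩⟩⟩
    set e : K ≃ Shrink.{0} K := equivShrink K with he
    letI : Max (Shrink.{0} K) := ⟨fun a b => e (e.symm a ⊔ e.symm b)⟩
    letI : Min (Shrink.{0} K) := ⟨fun a b => e (e.symm a ⊓ e.symm b)⟩
    letI : LE (Shrink.{0} K) := ⟨fun a b => e.symm a ≤ e.symm b⟩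
    letI : LT (Shrink.{0} K) := ⟨fun a b => e.symm a < e.symm b⟩
    letI instN : Lattice (Shrink.{0} K) :=
      Function.Injective.lattice (e.symm : Shrink.{0} K → K) e.symm.injective Iff.rfl Iff.rfl
        (fun a b => e.symm_apply_apply _) (fun a b => e.symm_apply_apply _)
    letI : latLang.Structure (Shrink.{0} K) := latStructure _
    haveI : Fintype (Shrink.{0} K) := Fintype.ofEquiv K e
    -- `e.symm` is a first-order equivalence
    set g : (Shrink.{0} K) ≃[latLang] K :=
      { toEquiv := e.symm
        map_fun' := by
          intro l f x
          match l, f with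
          | 2, true =>
              rw [funMap_sup, funMap_sup]
              exact e.symm_apply_apply _
          | 2, false =>
              rw [funMap_inf, funMap_inf]
              exact e.symm_apply_apply _
        map_rel' := fun {l} r _ => Empty.elim r } with hg
    refine ⟨Shrink.{0} K, instN, inferInstance, fun h => ?_⟩
    exact hfailK ((Language.StrongHomClass.realize_sentence g φ.alls).1 h)
end

section
/- Let A be the four-element distributive bisemilattice S × L with elements 0 = (x,y), a = (y,y), b = (x,z), 1 = (y,z), where ⟨{x,y}; ∧, ⊓⟩ has both operations as the semilattice with x below y, and ⟨{y,z}; ∧, ⊓⟩ has ∧ the meet of the chain y < z and ⊓ the meet of the chain z < y. Then the congruence lattice of A is isomorphic to the pentagon N₅: its congruences are exactly 0_A, α (classes {a,1},{0,b}), β (classes {0,a},{b,1}), γ (classes {a},{1},{0,b}), and 1_A, with γ < α, γ and β incomparable, α and β incomparable, α ∩ β = 0_A, α ∨ β = 1_A, γ ∨ β = 1_A, γ ∩ β = 0_A. -/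
namespace Stmt18

/-- The four-element distributive bisemilattice `S × L`, realized on `Bool × Bool`:
`0 = (false, false)`, `a = (true, false)`, `b = (false, true)`, `1 = (true, true)`. -/
abbrev A : Type := Bool × Bool

/-- The first semilattice operation `∧` (pointwise meet). -/
def meet₁ (p q : A) : A := (p.1 && q.1, p.2 && q.2)

/-- The second semilattice operation `⊓` (meet in the first coordinate, join in the
second, reflecting that `⊓` reverses the chain of `L`). -/
def meet₂ (p q : A) : A := (p.1 && q.1, p.2 || q.2)

/-- A congruence on the bisemilattice `A`. -/
def IsCong (θ : Setoid A) : Prop :=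
  ∀ p q r s : A, θ.r p q → θ.r r s → θ.r (meet₁ p r) (meet₁ q s) ∧ θ.r (meet₂ p r) (meet₂ q s)

/-- The congruence `α`, with classes `{a, 1}` and `{0, b}`. -/
def α : Setoid A := ⟨fun p q => p.1 = q.1, ⟨fun _ => rfl, Eq.symm, Eq.trans⟩⟩

/-- The congruence `β`, with classes `{0, a}` and `{b, 1}`. -/
def β : Setoid A := ⟨fun p q => p.2 = q.2, ⟨fun _ => rfl, Eq.symm, Eq.trans⟩⟩

/-- The congruence `γ`, with classes `{a}`, `{1}` and `{0, b}`. -/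
def γ : Setoid A :=
  ⟨fun p q => (p.1 = false ∧ q.1 = false) ∨ p = q,
    ⟨fun _ => Or.inr rfl,
     fun h => h.elim (fun h => Or.inl ⟨h.2, h.1⟩) (fun h => Or.inr h.symm),
     fun h₁ h₂ => by
        rcases h₁ with h₁ | h₁
        · rcases h₂ with h₂ | h₂
          · exact Or.inl ⟨h₁.1, h₂.2⟩
          · exact Or.inl ⟨h₁.1, h₂ ▸ h₁.2⟩
        · rcases h₂ with h₂ | h₂
          · exact Or.inl ⟨h₁ ▸ h₂.1, h₂.2⟩
          · exact Or.inr (h₁.trans h₂)⟩⟩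

-- element abbreviations
local notation "eO" => ((false, false) : A)
local notation "eA" => ((true, false) : A)
local notation "eB" => ((false, true) : A)
local notation "eI" => ((true, true) : A)

section Cls
variable {θ : Setoid A} (h : IsCong θ)
include h

lemma mono1 {p q : A} (hpq : θ.r p q) (r : A) : θ.r (meet₁ p r) (meet₁ q r) :=
  (h p q r r hpq (θ.refl r)).1

lemma mono2 {p q : A} (hpq : θ.r p q) (r : A) : θ.r (meet₂ p r) (meet₂ q r) :=
  (h p q r r hpq (θ.refl r)).2

lemma L1 (hx : θ.r eA eI) : θ.r eO eB := mono1 h hx eB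
lemma L2 (hx : θ.r eO eA) : θ.r eB eI := mono2 h hx eI
lemma L3 (hx : θ.r eB eI) : θ.r eO eA := mono1 h hx eA
lemma L4 (hx : θ.r eO eI) : θ.r eO eA := mono1 h hx eA
lemma L5 (hx : θ.r eO eI) : θ.r eO eB := mono1 h hx eB
lemma L6 (hx : θ.r eA eB) : θ.r eA eO := mono1 h hx eA
lemma L7 (hx : θ.r eA eB) : θ.r eO eB := mono1 h hx eB

lemma classify : θ = ⊥ ∨ θ = α ∨ θ = β ∨ θ = γ ∨ θ = ⊤ := by
  by_cases h0a : θ.r eO eA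
  · by_cases ht : θ.r eA eI ∨ θ.r eO eB
    · -- top
      right; right; right; right
      have hb1 := L2 h h0a
      have h0b : θ.r eO eB := by
        rcases ht with ht | ht
        · exact L5 h (Setoid.trans h0a ht)
        · exact ht
      have key : ∀ p : A, θ.r eO p := by
        rintro ⟨x | x, y | y⟩
        all_goals first
          | exact θ.refl _
          | exact h0a
          | exact h0b
          | exact Setoid.trans h0b hb1
      apply Setoid.ext
      intro p q
      exact iff_of_true (Setoid.trans (Setoid.symm (key p)) (key q)) trivial
    · -- beta
      push_neg at ht
      obtain ⟨ha1, h0b⟩ := ht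
      right; right; left
      have hb1 := L2 h h0a
      apply Setoid.ext
      rintro ⟨px, py⟩ ⟨qx, qy⟩
      show _ ↔ py = qy
      rcases px <;> rcases py <;> rcases qx <;> rcases qy <;>
        first
        | (refine iff_of_true ?_ (by decide); first
            | exact θ.refl _ | exact h0a | exact Setoid.symm h0a
            | exact hb1 | exact Setoid.symm hb1)
        | (refine iff_of_false (fun hx => ?_) (by decide); first
           | exact h0b hx
           | exact h0b (Setoid.symm hx)
           | exact ha1 hx
           | exact ha1 (Setoid.symm hx)
           | exact h0b (L5 h hx)
           | exact h0b (L5 h (Setoid.symm hx))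
           | exact h0b (L7 h hx)
           | exact h0b (L7 h (Setoid.symm hx)))
  · have hb1 : ¬ θ.r eB eI := fun hx => h0a (L3 h hx)
    have h01 : ¬ θ.r eO eI := fun hx => h0a (L4 h hx)
    have hab : ¬ θ.r eA eB := fun hx => h0a (Setoid.symm (L6 h hx))
    by_cases ha1 : θ.r eA eI
    · -- alpha
      right; left
      have h0b := L1 h ha1
      apply Setoid.ext
      rintro ⟨px, py⟩ ⟨qx, qy⟩
      show _ ↔ px = qx
      rcases px <;> rcases py <;> rcases qx <;> rcases qy <;>
        first
        | (refine iff_of_true ?_ (by decide); first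
            | exact θ.refl _ | exact ha1 | exact Setoid.symm ha1
            | exact h0b | exact Setoid.symm h0b)
        | (refine iff_of_false (fun hx => ?_) (by decide); first
           | exact h0a hx | exact h0a (Setoid.symm hx)
           | exact h01 hx | exact h01 (Setoid.symm hx)
           | exact hab hx | exact hab (Setoid.symm hx)
           | exact hb1 hx | exact hb1 (Setoid.symm hx))
    · by_cases h0b : θ.r eO eB
      · -- gamma
        right; right; right; left
        apply Setoid.ext
        rintro ⟨px, py⟩ ⟨qx, qy⟩
        show _ ↔ (px = false ∧ qx = false) ∨ ((px, py) : A) = (qx, qy)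
        rcases px <;> rcases py <;> rcases qx <;> rcases qy <;>
          first
          | (refine iff_of_true ?_ (by decide); first
              | exact θ.refl _ | exact h0b | exact Setoid.symm h0b)
          | (refine iff_of_false (fun hx => ?_) (by decide); first
             | exact h0a hx | exact h0a (Setoid.symm hx)
             | exact h01 hx | exact h01 (Setoid.symm hx)
             | exact hab hx | exact hab (Setoid.symm hx)
             | exact hb1 hx | exact hb1 (Setoid.symm hx)
             | exact ha1 hx | exact ha1 (Setoid.symm hx))
      · -- bot
        left
        apply Setoid.ext
        rintro ⟨px, py⟩ ⟨qx, qy⟩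
        show _ ↔ ((px, py) : A) = (qx, qy)
        rcases px <;> rcases py <;> rcases qx <;> rcases qy <;>
          first
          | (refine iff_of_true ?_ (by decide); exact θ.refl _)
          | (refine iff_of_false (fun hx => ?_) (by decide); first
             | exact h0a hx | exact h0a (Setoid.symm hx)
             | exact h01 hx | exact h01 (Setoid.symm hx)
             | exact hab hx | exact hab (Setoid.symm hx)
             | exact hb1 hx | exact hb1 (Setoid.symm hx)
             | exact ha1 hx | exact ha1 (Setoid.symm hx)
             | exact h0b hx | exact h0b (Setoid.symm hx))
end Cls

lemma botr : (⊥ : Setoid A).r = (· = ·) := Setoid.bot_def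
lemma topr : (⊤ : Setoid A).r = fun _ _ => True := Setoid.top_def

lemma congBot : IsCong (⊥ : Setoid A) := by
  intro p q r s h1 h2
  rw [show (⊥ : Setoid A).r = (· = ·) from botr] at *
  subst h1; subst h2; exact ⟨rfl, rfl⟩

lemma congTop : IsCong (⊤ : Setoid A) := by
  intro p q r s h1 h2
  rw [show (⊤ : Setoid A).r = fun _ _ => True from topr]
  exact ⟨trivial, trivial⟩

instance : DecidableRel α.r := fun p q => inferInstanceAs (Decidable (p.1 = q.1))
instance : DecidableRel β.r := fun p q => inferInstanceAs (Decidable (p.2 = q.2))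
instance : DecidableRel γ.r := fun p q =>
  inferInstanceAs (Decidable ((p.1 = false ∧ q.1 = false) ∨ p = q))

lemma congα : IsCong α := by unfold IsCong; decide
lemma congβ : IsCong β := by unfold IsCong; decide
lemma congγ : IsCong γ := by unfold IsCong; decide

/-- The congruence lattice of the bisemilattice `S × L` is the pentagon `N₅`: its
congruences are exactly `⊥, α, β, γ, ⊤`, with `γ < α`, `γ ∥ β`, `α ∥ β`,
`α ⊓ β = ⊥`, `α ⊔ β = ⊤`, `γ ⊔ β = ⊤` and `γ ⊓ β = ⊥`. -/
theorem stmt_18 :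
    {θ : Setoid A | IsCong θ} = {⊥, α, β, γ, ⊤} ∧
      γ < α ∧ ¬ γ ≤ β ∧ ¬ β ≤ γ ∧ ¬ α ≤ β ∧ ¬ β ≤ α ∧
      α ⊓ β = ⊥ ∧ α ⊔ β = ⊤ ∧ γ ⊔ β = ⊤ ∧ γ ⊓ β = ⊥ := by
  refine ⟨?_, ?_, ?_, ?_, ?_, ?_, ?_, ?_, ?_, ?_⟩
  · ext θ
    simp only [Set.mem_setOf_eq, Set.mem_insert_iff, Set.mem_singleton_iff]
    constructor
    · exact classify
    · rintro (rfl | rfl | rfl | rfl | rfl)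
      exacts [congBot, congα, congβ, congγ, congTop]
  · constructor
    · refine Setoid.le_def.mpr ?_
      rintro ⟨px, py⟩ ⟨qx, qy⟩ h
      rcases h with ⟨h1, h2⟩ | h
      · exact h1.trans h2.symm
      · rw [h]
    · intro hle
      have h1 : α.r eA eI := rfl
      have h2 : γ.r eA eI := Setoid.le_def.mp hle h1
      exact absurd h2 (by decide)
  · intro hle
    have h1 : γ.r eO eB := Or.inl ⟨rfl, rfl⟩
    have h2 : β.r eO eB := Setoid.le_def.mp hle h1
    exact absurd h2 (by decide)
  · intro hle
    have h1 : β.r eO eA := rfl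
    have h2 : γ.r eO eA := Setoid.le_def.mp hle h1
    exact absurd h2 (by decide)
  · intro hle
    have h1 : α.r eO eB := rfl
    have h2 : β.r eO eB := Setoid.le_def.mp hle h1
    exact absurd h2 (by decide)
  · intro hle
    have h1 : β.r eO eA := rfl
    have h2 : α.r eO eA := Setoid.le_def.mp hle h1
    exact absurd h2 (by decide)
  · apply Setoid.ext
    intro p q
    have hinf : (α ⊓ β).r p q ↔ (α.r p q ∧ β.r p q) := Setoid.inf_iff_and
    rw [hinf, show (⊥ : Setoid A).r = (· = ·) from botr]
    show p.1 = q.1 ∧ p.2 = q.2 ↔ p = q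
    exact (Prod.ext_iff).symm
  · rw [_root_.eq_top_iff]
    refine Setoid.le_def.mpr ?_
    have hα : α ≤ α ⊔ β := le_sup_left
    have hβ : β ≤ α ⊔ β := le_sup_right
    have key : ∀ p : A, (α ⊔ β).r eO p := by
      rintro ⟨x | x, y | y⟩
      · exact (α ⊔ β).refl _
      · exact Setoid.le_def.mp hα (show α.r eO eB from rfl)
      · exact Setoid.le_def.mp hβ (show β.r eO eA from rfl)
      · exact (α ⊔ β).trans (Setoid.le_def.mp hα (show α.r eO eB from rfl))
          (Setoid.le_def.mp hβ (show β.r eB eI from rfl))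
    intro p q _
    exact (α ⊔ β).trans ((α ⊔ β).symm (key p)) (key q)
  · rw [_root_.eq_top_iff]
    refine Setoid.le_def.mpr ?_
    have hγ : γ ≤ γ ⊔ β := le_sup_left
    have hβ : β ≤ γ ⊔ β := le_sup_right
    have key : ∀ p : A, (γ ⊔ β).r eO p := by
      rintro ⟨x | x, y | y⟩
      · exact (γ ⊔ β).refl _
      · exact Setoid.le_def.mp hγ (show γ.r eO eB from Or.inl ⟨rfl, rfl⟩)
      · exact Setoid.le_def.mp hβ (show β.r eO eA from rfl)
      · exact (γ ⊔ β).trans (Setoid.le_def.mp hγ (show γ.r eO eB from Or.inl ⟨rfl, rfl⟩))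
          (Setoid.le_def.mp hβ (show β.r eB eI from rfl))
    intro p q _
    exact (γ ⊔ β).trans ((γ ⊔ β).symm (key p)) (key q)
  · apply Setoid.ext
    intro p q
    have hinf : (γ ⊓ β).r p q ↔ (γ.r p q ∧ β.r p q) := Setoid.inf_iff_and
    rw [hinf, show (⊥ : Setoid A).r = (· = ·) from botr]
    show (((p.1 = false ∧ q.1 = false) ∨ p = q) ∧ p.2 = q.2) ↔ p = q
    constructor
    · rintro ⟨⟨h1, h2⟩ | h, h3⟩
      · exact Prod.ext (h1.trans h2.symm) h3
      · exact h
    · rintro rfl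
      exact ⟨Or.inr rfl, rfl⟩


end Stmt18
end
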